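/- Let p ≥ 3 be an odd integer, let k ≥ 1, let m₁, …, m_k be positive integers, let ε₁, …, ε_k ∈ {−1, 1}, and let s ∈ [0, 1]. Define l_s : ℝ^{1+k} → ℝ by l_s(x, y₁, …, y_k) = x^p + ∑_{i=1}^k (p·s·x·y_i^{m_i(p−1)} + ε_i·y_i^{m_i p}). Then the gradient of l_s vanishes at a point (x, y₁, …, y_k) if and only if (x, y₁, …, y_k) = 0; in particular l_s has an isolated critical point at the origin for every s ∈ [0, 1]. -/

import Mathlib

private lemma hasFDerivAt_pow_comp {E : Type*} [NormedAddCommGroup E] [NormedSpace ℝ E]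
    {f : E → ℝ} {f' : E →L[ℝ] ℝ} {v : E} (n : ℕ) (hf : HasFDerivAt f f' v) :
    HasFDerivAt (fun q => f q ^ n) (((n : ℝ) * f v ^ (n - 1)) • f') v :=
  (hasDerivAt_pow n (f v)).comp_hasFDerivAt v hf

/-- For `p ≥ 3` odd, `ε_i ∈ {±1}` and `s ∈ [0, 1]`, the polynomial
`l_s(x, y) = x^p + ∑ (p·s·x·y_i^{m_i(p−1)} + ε_i·y_i^{m_i p})` has gradient
vanishing exactly at the origin. -/
theorem isolated_critical_point_l (p k : ℕ) (hp : Odd p) (hp3 : 3 ≤ p) (hk : 1 ≤ k)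
    (m : Fin k → ℕ) (hm : ∀ i, 0 < m i)
    (εv : Fin k → ℝ) (hεv : ∀ i, εv i = 1 ∨ εv i = -1)
    (s : ℝ) (hs : s ∈ Set.Icc (0 : ℝ) 1) :
    ∀ v : ℝ × (Fin k → ℝ),
      fderiv ℝ (fun q : ℝ × (Fin k → ℝ) =>
          q.1 ^ p + ∑ i, ((p : ℝ) * s * q.1 * q.2 i ^ (m i * (p - 1)) +
            εv i * q.2 i ^ (m i * p))) v = 0 ↔
        v = 0 := by
  have hp1 : p - 1 ≠ 0 := by omega
  have hevp : Even (p - 1) := Nat.Odd.sub_odd hp odd_one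
  have hmp3 : ∀ i, 3 ≤ m i * p := fun i => by
    have := Nat.mul_le_mul (hm i) hp3; simpa using this
  intro v
  have hx : HasFDerivAt (fun q : ℝ × (Fin k → ℝ) => q.1)
      (ContinuousLinearMap.fst ℝ ℝ (Fin k → ℝ)) v := hasFDerivAt_fst
  have hyi : ∀ i : Fin k, HasFDerivAt (fun q : ℝ × (Fin k → ℝ) => q.2 i)
      ((ContinuousLinearMap.proj i).comp (ContinuousLinearMap.snd ℝ ℝ (Fin k → ℝ))) v :=
    fun i => ((ContinuousLinearMap.proj i).comp
      (ContinuousLinearMap.snd ℝ ℝ (Fin k → ℝ))).hasFDerivAt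
  have H : HasFDerivAt (fun q : ℝ × (Fin k → ℝ) =>
      q.1 ^ p + ∑ i, ((p : ℝ) * s * q.1 * q.2 i ^ (m i * (p - 1)) +
        εv i * q.2 i ^ (m i * p))) _ v :=
    (hasFDerivAt_pow_comp p hx).add (HasFDerivAt.fun_sum fun i _ =>
      ((hx.const_mul ((p : ℝ) * s)).mul (hasFDerivAt_pow_comp (m i * (p - 1)) (hyi i))).add
        ((hasFDerivAt_pow_comp (m i * p) (hyi i)).const_mul (εv i)))
  rw [H.fderiv]
  constructor
  · intro h
    -- x-partial : evaluate at direction (1, 0)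
    have h1 := congrFun (congrArg DFunLike.coe h) ((1:ℝ), (0 : Fin k → ℝ))
    simp [ContinuousLinearMap.add_apply, ContinuousLinearMap.smul_apply,
      ContinuousLinearMap.sum_apply, ContinuousLinearMap.comp_apply,
      ContinuousLinearMap.proj_apply, smul_eq_mul] at h1
    have hA : 0 ≤ (p : ℝ) * v.1 ^ (p - 1) :=
      mul_nonneg (Nat.cast_nonneg p) (hevp.pow_nonneg _)
    have hB : 0 ≤ ∑ i : Fin k, v.2 i ^ (m i * (p - 1)) * ((p : ℝ) * s) :=
      Finset.sum_nonneg fun i _ => mul_nonneg ((hevp.mul_left (m i)).pow_nonneg _)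
        (mul_nonneg (Nat.cast_nonneg p) hs.1)
    have hv1 : v.1 = 0 := by
      have h0 : (p : ℝ) * v.1 ^ (p - 1) = 0 :=
        ((add_eq_zero_iff_of_nonneg hA hB).mp h1).1
      have hpne : (p : ℝ) ≠ 0 := by positivity
      have := (mul_eq_zero.mp h0).resolve_left hpne
      exact pow_eq_zero_iff hp1 |>.mp this
    have hv2 : ∀ j, v.2 j = 0 := by
      intro j
      have h2 := congrFun (congrArg DFunLike.coe h) ((0:ℝ), Pi.single j (1:ℝ))
      simp [ContinuousLinearMap.add_apply, ContinuousLinearMap.smul_apply,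
        ContinuousLinearMap.sum_apply, ContinuousLinearMap.comp_apply,
        ContinuousLinearMap.proj_apply, smul_eq_mul, hv1, Pi.single_apply,
        Finset.sum_ite_eq', mul_ite] at h2
      have hεne : εv j ≠ 0 := by rcases hεv j with h' | h' <;> rw [h'] <;> norm_num
      rcases h2 with h' | h' | h'
      · exact absurd h' hεne
      · rcases h' with h'' | h''
        · exact absurd h'' (hm j).ne'
        · omega
      · exact h'.1
    exact Prod.ext hv1 (funext hv2)
  · rintro rfl
    have h2 : ∀ i, m i * (p - 1) ≠ 0 := fun i => Nat.mul_ne_zero (hm i).ne' hp1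
    have h3 : ∀ i, m i * p - 1 ≠ 0 := fun i => by have := hmp3 i; omega
    ext w <;>
      simp [zero_pow, hp1, h2, h3]
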